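/- If S is a weak-c-sparse subset of the n×m checkerboard, then |S| ≤ n+2m−2. -/

import Mathlib

/-- Lexicographic order on cells of the checkerboard. -/
def clt (p q : ℕ × ℕ) : Prop := p.1 < q.1 ∨ (p.1 = q.1 ∧ p.2 < q.2)

/-- The n × m checkerboard: cells (i,j) with 1 ≤ i ≤ n, 1 ≤ j ≤ m. -/
def board (n m : ℕ) : Finset (ℕ × ℕ) := Finset.Icc 1 n ×ˢ Finset.Icc 1 m

/-- A set of cells is c-sparse if no cell of the set in a different column lies
strictly (lexicographically) between two cells of the set in the same column. -/
def CSparse (S : Finset (ℕ × ℕ)) : Prop :=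
  ∀ a₁ a₂ b x y, (a₁, b) ∈ S → (a₂, b) ∈ S → (x, y) ∈ S → y ≠ b →
    clt (a₁, b) (x, y) → clt (x, y) (a₂, b) → False

/-- A set of cells is weak-c-sparse if no cell of the set in a different column and with
row coordinate strictly between lies lexicographically strictly between two cells of the
set in the same column. -/
def WeakCSparse (S : Finset (ℕ × ℕ)) : Prop :=
  ∀ a₁ a₂ b x y, (a₁, b) ∈ S → (a₂, b) ∈ S → (x, y) ∈ S → y ≠ b →
    a₁ < x → x < a₂ → clt (a₁, b) (x, y) → clt (x, y) (a₂, b) → False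

lemma col_unique {S : Finset (ℕ × ℕ)} (h : WeakCSparse S) {a₁ a₂ x y y' : ℕ}
    (h1 : (a₁, y) ∈ S) (h2 : (a₂, y) ∈ S) (h3 : (x, y') ∈ S)
    (hlt1 : a₁ < x) (hlt2 : x < a₂) : y' = y := by
  by_contra hne
  exact h a₁ a₂ y x y' h1 h2 h3 hne hlt1 hlt2 (Or.inl hlt1) (Or.inl hlt2)

theorem weak_csparse_card_le (n m : ℕ) (S : Finset (ℕ × ℕ))
    (hS : S ⊆ board n m) (h : WeakCSparse S) : S.card ≤ n + 2 * m - 2 := by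
  classical
  have hmem : ∀ p ∈ S, 1 ≤ p.1 ∧ p.1 ≤ n ∧ 1 ≤ p.2 ∧ p.2 ≤ m := by
    intro p hp
    have := hS hp
    simp only [board, Finset.mem_product, Finset.mem_Icc] at this
    tauto
  -- trivial cases
  rcases Nat.lt_or_ge n 2 with hn | hn
  · -- n ≤ 1
    rcases Nat.eq_zero_or_pos n with hn0 | hn1
    · -- n = 0 : S empty
      have : S = ∅ := by
        apply Finset.eq_empty_of_forall_notMem
        intro p hp
        have := hmem p hp
        omega
      simp [this]
    · -- n = 1 : all rows equal 1, inject via snd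
      have hcard : S.card ≤ m := by
        have : S.card ≤ (Finset.Icc 1 m).card := by
          apply Finset.card_le_card_of_injOn (fun p => p.2)
          · intro p hp
            have := hmem p hp
            simp only [Finset.mem_coe, Finset.mem_Icc]; omega
          · intro p hp q hq hpq
            have h1 := hmem p hp
            have h2 := hmem q hq
            have : p.1 = q.1 := by omega
            exact Prod.ext this hpq
        simpa using this
      rcases Nat.eq_zero_or_pos m with hm0 | hm1
      · have : S = ∅ := by
          apply Finset.eq_empty_of_forall_notMem
          intro p hp
          have := hmem p hp
          omega
        simp [this]
      · omega
  -- main case n ≥ 2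
  set P : ℕ × ℕ → Prop := fun p =>
    (∃ a, a < p.1 ∧ (a, p.2) ∈ S) ∧ (∃ a, p.1 < a ∧ (a, p.2) ∈ S) with hP
  have hsplit := Finset.card_filter_add_card_filter_not (s := S) (p := P)
  have hI : (S.filter P).card ≤ n - 2 := by
    have : (S.filter P).card ≤ (Finset.Ico 2 n).card := by
      apply Finset.card_le_card_of_injOn (fun p => p.1)
      · intro p hp
        rw [Finset.mem_coe, Finset.mem_filter] at hp
        obtain ⟨hpS, ⟨a, ha, haS⟩, ⟨b, hb, hbS⟩⟩ := hp
        have h1 := hmem _ haS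
        have h2 := hmem _ hbS
        simp only [Finset.mem_coe, Finset.mem_Ico]
        omega
      · intro p hp q hq hpq
        simp only [Finset.mem_coe, Finset.mem_filter] at hp hq
        obtain ⟨hpS, ⟨a, ha, haS⟩, ⟨b, hb, hbS⟩⟩ := hp
        obtain ⟨hqS, _, _⟩ := hq
        have hq' : (q.1, q.2) ∈ S := by simpa using hqS
        have hpq' : p.1 = q.1 := hpq
        have : q.2 = p.2 := col_unique h haS hbS (by rwa [← hpq'] at hq') ha hb
        exact Prod.ext hpq' this.symm
    simpa using this
  have hE : (S.filter (fun p => ¬ P p)).card ≤ 2 * m := by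
    have : (S.filter fun p => ¬ P p).card ≤ ((Finset.Icc 1 m) ×ˢ ({0, 1} : Finset ℕ)).card := by
      apply Finset.card_le_card_of_injOn
        (fun p => (p.2, if ∃ a, a < p.1 ∧ (a, p.2) ∈ S then (1:ℕ) else 0))
      · intro p hp
        rw [Finset.mem_coe, Finset.mem_filter] at hp
        have := hmem _ hp.1
        simp only [Finset.mem_coe, Finset.mem_product, Finset.mem_Icc, Finset.mem_insert, Finset.mem_singleton]
        constructor
        · omega
        · split <;> simp
      · intro p hp q hq hpq
        simp only [Finset.mem_coe, Finset.mem_filter] at hp hq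
        obtain ⟨hpS, hpE⟩ := hp
        obtain ⟨hqS, hqE⟩ := hq
        have hpq' : (p.2, if ∃ a, a < p.1 ∧ (a, p.2) ∈ S then (1:ℕ) else 0)
            = (q.2, if ∃ a, a < q.1 ∧ (a, q.2) ∈ S then (1:ℕ) else 0) := hpq
        have hy : p.2 = q.2 := (Prod.ext_iff.mp hpq').1
        have hbit := (Prod.ext_iff.mp hpq').2
        have hp' : (p.1, p.2) ∈ S := by simpa using hpS
        have hq' : (q.1, q.2) ∈ S := by simpa using hqS
        by_cases hD : ∃ a, a < p.1 ∧ (a, p.2) ∈ S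
        · -- p has a cell below, so (being in E) no cell above; same for q
          have hDq : ∃ a, a < q.1 ∧ (a, q.2) ∈ S := by
            by_contra hc
            rw [if_pos hD, if_neg hc] at hbit
            exact one_ne_zero hbit
          have hUp : ¬ ∃ a, p.1 < a ∧ (a, p.2) ∈ S := fun hU => hpE ⟨hD, hU⟩
          have hUq : ¬ ∃ a, q.1 < a ∧ (a, q.2) ∈ S := fun hU => hqE ⟨hDq, hU⟩
          have hx : p.1 = q.1 := by
            rcases Nat.lt_trichotomy p.1 q.1 with hlt | heq | hgt
            · exact absurd ⟨q.1, hlt, by rwa [hy]⟩ hUp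
            · exact heq
            · exact absurd ⟨p.1, hgt, by rwa [← hy]⟩ hUq
          exact Prod.ext hx hy
        · have hDq : ¬ ∃ a, a < q.1 ∧ (a, q.2) ∈ S := by
            by_contra hc
            rw [if_neg hD, if_pos hc] at hbit
            exact one_ne_zero hbit.symm
          have hx : p.1 = q.1 := by
            rcases Nat.lt_trichotomy p.1 q.1 with hlt | heq | hgt
            · exact absurd ⟨p.1, hlt, by rwa [← hy]⟩ hDq
            · exact heq
            · exact absurd ⟨q.1, hgt, by rwa [hy]⟩ hD
          exact Prod.ext hx hy
    simpa [Finset.card_product, mul_comm] using this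
  omega
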